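/- Let n ≥ 2 and work in S_{2n}. Let σ∞ be the 2n-cycle sending j ↦ j−1 for j ≥ 2 and 1 ↦ 2n, let σ0 = ∏_{i=1}^{n} (i, 2n+1−i), and for some h with 1 ≤ h ≤ n−1 let τ = (h, 2n−h) and σ1 = ∏_{1 ≤ i ≤ n−1, i ≠ h} (i, 2n−i). Let m ≥ 2 be a divisor of n with n/m ≥ 2. Then the subgroup of S_{2n} generated by σ0, σ∞, σ1, τ preserves some partition of {1,…,2n} into 2m blocks each of cardinality n/m if and only if m divides h. -/
import Mathlib

private def stmtBlk (m N c : ℕ) : Set ℕ := (fun k => c + 2*m*k) '' Set.Iio N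

private lemma stmt_mem_blk {m N c x : ℕ} :
    x ∈ stmtBlk m N c ↔ ∃ k, k < N ∧ x = c + 2*m*k := by
  simp [stmtBlk, Set.mem_image, eq_comm]

private lemma stmt_blk_finite (m N c : ℕ) : (stmtBlk m N c).Finite :=
  (Set.finite_Iio N).image _

private lemma stmt_blk_ncard {m : ℕ} (hm : 0 < m) (N c : ℕ) :
    (stmtBlk m N c).ncard = N := by
  have hinj : Function.Injective (fun k => c + 2*m*k) := by
    intro a b hab
    simp only at hab
    have : 2*m*a = 2*m*b := by omega
    exact Nat.eq_of_mul_eq_mul_left (by omega) this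
  rw [stmtBlk, Set.ncard_image_of_injective _ hinj, ← Finset.coe_range,
    Set.ncard_coe_finset, Finset.card_range]

private lemma stmt_blk_unique {m N c c' x : ℕ} (hc1 : 1 ≤ c) (hc2 : c ≤ 2*m)
    (hc1' : 1 ≤ c') (hc2' : c' ≤ 2*m)
    (hx : x ∈ stmtBlk m N c) (hx' : x ∈ stmtBlk m N c') : c = c' := by
  obtain ⟨k, -, rfl⟩ := stmt_mem_blk.mp hx
  obtain ⟨k', -, he⟩ := stmt_mem_blk.mp hx'
  rcases le_total k k' with hkk | hkk
  · obtain ⟨d, rfl⟩ := Nat.exists_eq_add_of_le hkk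
    have h2 : 2*m*(k+d) = 2*m*k + 2*m*d := by ring
    rcases Nat.eq_zero_or_pos d with rfl | hd
    · omega
    · have : 2*m ≤ 2*m*d := Nat.le_mul_of_pos_right _ hd
      omega
  · obtain ⟨d, rfl⟩ := Nat.exists_eq_add_of_le hkk
    have h2 : 2*m*(k'+d) = 2*m*k' + 2*m*d := by ring
    rcases Nat.eq_zero_or_pos d with rfl | hd
    · omega
    · have : 2*m ≤ 2*m*d := Nat.le_mul_of_pos_right _ hd
      omega

private lemma stmt_img_blk {m N c c' : ℕ} (hm : 0 < m) (g : Equiv.Perm ℕ)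
    (hg : ∀ k, k < N → g (c + 2*m*k) ∈ stmtBlk m N c') :
    g '' stmtBlk m N c = stmtBlk m N c' := by
  apply Set.eq_of_subset_of_ncard_le
  · rintro _ ⟨x, hx, rfl⟩
    obtain ⟨k, hk, rfl⟩ := stmt_mem_blk.mp hx
    exact hg k hk
  · rw [Set.ncard_image_of_injective _ g.injective, stmt_blk_ncard hm, stmt_blk_ncard hm]
  · exact stmt_blk_finite m N c'

private lemma stmt_inv_pres {P : Set (Set ℕ)} (hfin : P.Finite) (g : Equiv.Perm ℕ)
    (hg : ∀ B ∈ P, g '' B ∈ P) : ∀ B ∈ P, (⇑g⁻¹) '' B ∈ P := by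
  haveI : Finite P := hfin
  set F : P → P := fun B => ⟨g '' B.1, hg B.1 B.2⟩ with hF
  have hFi : Function.Injective F := by
    rintro ⟨A, hA⟩ ⟨B, hB⟩ hAB
    simp only [hF, Subtype.mk.injEq] at hAB
    exact Subtype.ext ((Set.image_injective.mpr g.injective) hAB)
  have hFs := Finite.injective_iff_surjective.mp hFi
  intro B hB
  obtain ⟨⟨B', hB'⟩, hBB⟩ := hFs ⟨B, hB⟩
  have : g '' B' = B := congrArg Subtype.val hBB
  rw [← this]
  have : (⇑g⁻¹) '' (g '' B') = B' := by
    rw [← Set.image_comp]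
    simp
  rw [this]; exact hB'

private lemma stmt_prod0_aux (n : ℕ) :
    ∀ t, t ≤ n → ∀ j,
      (((List.range t).map (fun i => Equiv.swap (i+1) (2*n - i))).prod) j =
      if (1 ≤ j ∧ j ≤ t) ∨ (2*n+1-t ≤ j ∧ j ≤ 2*n) then 2*n+1-j else j := by
  intro t
  induction t with
  | zero =>
    intro _ j
    simp only [List.range_zero, List.map_nil, List.prod_nil, Equiv.Perm.coe_one, id_eq]
    split_ifs with hc
    · omega
    · rfl
  | succ t ih =>
    intro ht j
    rw [List.range_succ, List.map_append, List.prod_append, List.map_singleton,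
      List.prod_singleton, Equiv.Perm.mul_apply]
    by_cases hj1 : j = t + 1
    · subst hj1
      rw [Equiv.swap_apply_left, ih (by omega)]
      split_ifs <;> omega
    · by_cases hj2 : j = 2*n - t
      · subst hj2
        rw [Equiv.swap_apply_right, ih (by omega)]
        split_ifs <;> omega
      · rw [Equiv.swap_apply_of_ne_of_ne hj1 hj2, ih (by omega)]
        split_ifs <;> omega

private lemma stmt_prod1_aux (n h : ℕ) (hn : 1 ≤ n) :
    ∀ t, t ≤ n - 1 → ∀ j,
      ((((List.range t).filter (fun i => decide (i + 1 ≠ h))).map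
        (fun i => Equiv.swap (i+1) (2*n - 1 - i))).prod) j =
      if (1 ≤ j ∧ j ≤ t ∧ j ≠ h) ∨ (2*n-t ≤ j ∧ j ≤ 2*n-1 ∧ j ≠ 2*n-h) then 2*n-j else j := by
  intro t
  induction t with
  | zero =>
    intro _ j
    simp only [List.range_zero, List.filter_nil, List.map_nil, List.prod_nil,
      Equiv.Perm.coe_one, id_eq]
    split_ifs with hc
    · omega
    · rfl
  | succ t ih =>
    intro ht j
    rw [List.range_succ, List.filter_append]
    by_cases hth : t + 1 = h
    · have : List.filter (fun i => decide (i + 1 ≠ h)) [t] = [] := by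
        simp [hth]
      rw [this, List.append_nil, ih (by omega)]
      split_ifs <;> omega
    · have : List.filter (fun i => decide (i + 1 ≠ h)) [t] = [t] := by
        simp [hth]
      rw [this, List.map_append, List.prod_append, List.map_singleton,
        List.prod_singleton, Equiv.Perm.mul_apply]
      by_cases hj1 : j = t + 1
      · subst hj1
        rw [Equiv.swap_apply_left, ih (by omega)]
        split_ifs <;> omega
      · by_cases hj2 : j = 2*n - 1 - t
        · subst hj2
          rw [Equiv.swap_apply_right, ih (by omega)]
          split_ifs <;> omega
        · rw [Equiv.swap_apply_of_ne_of_ne hj1 hj2, ih (by omega)]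
          split_ifs <;> omega

private lemma stmt_sigma_pow (n : ℕ) (hn : 1 ≤ n) (σi : Equiv.Perm ℕ)
    (hi1 : σi 1 = 2*n) (hij : ∀ j, 2 ≤ j → j ≤ 2*n → σi j = j - 1) :
    ∀ t x, 1 ≤ x → x ≤ 2*n → (σi^t) x = (x + 2*n*t - t - 1) % (2*n) + 1 := by
  intro t
  induction t with
  | zero =>
    intro x hx1 hx2
    simp only [pow_zero, Equiv.Perm.coe_one, id_eq, Nat.mul_zero]
    rw [Nat.mod_eq_of_lt (by omega)]
    omega
  | succ t ih =>
    intro x hx1 hx2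
    rw [pow_succ, Equiv.Perm.mul_apply]
    rw [show 2*n*(t+1) = 2*n*t + 2*n from by ring]
    obtain ⟨A, hA⟩ : ∃ A, 2*n*t = A := ⟨_, rfl⟩
    have htA : t ≤ A := by rw [← hA]; exact Nat.le_mul_of_pos_left t (by omega)
    rcases Nat.lt_or_ge x 2 with hx | hx
    · have hx1' : x = 1 := by omega
      subst hx1'
      rw [hi1, ih (2*n) (by omega) le_rfl, hA]
      congr 2
      omega
    · rw [hij x hx hx2, ih (x-1) (by omega) (by omega), hA]
      have harg : x + (A + 2*n) - (t+1) - 1 = (x - 1 + A - t - 1) + 2*n := by omega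
      rw [harg, Nat.add_mod_right]

private lemma stmt_sigma_pow_eq (n : ℕ) (hn : 1 ≤ n) (σi : Equiv.Perm ℕ)
    (hi1 : σi 1 = 2*n) (hij : ∀ j, 2 ≤ j → j ≤ 2*n → σi j = j - 1)
    {t x y X : ℕ} (hx1 : 1 ≤ x) (hx2 : x ≤ 2*n) (hy1 : 1 ≤ y) (hy2 : y ≤ 2*n)
    (hX : x + 2*n*X = y + t) : (σi^t) x = y := by
  rw [stmt_sigma_pow n hn σi hi1 hij t x hx1 hx2]
  have htX : X ≤ t := by
    rcases Nat.eq_zero_or_pos X with rfl | hXp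
    · omega
    · obtain ⟨X', rfl⟩ := Nat.exists_eq_add_of_le hXp
      rw [show 2*n*(1+X') = 2*n + 2*n*X' from by ring] at hX
      obtain ⟨A, hA⟩ : ∃ A, 2*n*X' = A := ⟨_, rfl⟩
      have : X' ≤ A := by rw [← hA]; exact Nat.le_mul_of_pos_left X' (by omega)
      omega
  obtain ⟨d, rfl⟩ := Nat.exists_eq_add_of_le htX
  rw [show 2*n*(X+d) = 2*n*X + 2*n*d from by ring]
  obtain ⟨A, hA⟩ : ∃ A, 2*n*X = A := ⟨_, rfl⟩
  obtain ⟨B, hB⟩ : ∃ B, 2*n*d = B := ⟨_, rfl⟩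
  have hdB : d ≤ B := by rw [← hB]; exact Nat.le_mul_of_pos_left d (by omega)
  rw [hA] at hX
  rw [hA, hB]
  have harg : x + (A + B) - (X + d) - 1 = (y - 1) + B := by omega
  rw [harg, ← hB, Nat.add_mul_mod_self_left, Nat.mod_eq_of_lt (by omega)]
  omega
private lemma stmt_c_mod {m c k x : ℕ} (hc1 : 1 ≤ c) (hc2 : c ≤ 2*m)
    (hx : x = c + 2*m*k) (hdvd : m ∣ x) : c = m ∨ c = 2*m := by
  obtain ⟨e, he⟩ := hdvd
  have h2k : 2*k < e := by
    apply Nat.lt_of_mul_lt_mul_left (a := m)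
    have e1 : m*(2*k) = 2*m*k := by ring
    omega
  obtain ⟨f, rfl⟩ : ∃ f, e = 2*k + f := ⟨e - 2*k, by omega⟩
  have hef : m*(2*k+f) = 2*m*k + m*f := by ring
  have hcf : c = m*f := by omega
  match f with
  | 0 => exfalso; simp at hcf; omega
  | 1 => left; omega
  | 2 =>
    right
    have e : m*2 = 2*m := by ring
    omega
  | (f+3) =>
    exfalso
    have : m*(f+3) = m*f + m + m + m := by ring
    omega
theorem stmt15 (n h m : ℕ) (hn : 2 ≤ n) (hh1 : 1 ≤ h) (hh2 : h ≤ n - 1)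
    (hm : 2 ≤ m) (hmn : m ∣ n) (hnm : 2 ≤ n / m)
    (σi : Equiv.Perm ℕ)
    (hout : ∀ j, j = 0 ∨ 2*n < j → σi j = j)
    (hi1 : σi 1 = 2*n) (hij : ∀ j, 2 ≤ j → j ≤ 2*n → σi j = j - 1)
    (σ0 σ1 τ : Equiv.Perm ℕ)
    (hσ0 : σ0 = ((List.range n).map (fun i => Equiv.swap (i+1) (2*n - i))).prod)
    (hτ : τ = Equiv.swap h (2*n - h))
    (hσ1 : σ1 = (((List.range (n-1)).filter (fun i => decide (i + 1 ≠ h))).map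
                 (fun i => Equiv.swap (i+1) (2*n - 1 - i))).prod) :
    (∃ P : Set (Set ℕ),
      ⋃₀ P = Set.Icc 1 (2*n) ∧ P.PairwiseDisjoint id ∧ P.ncard = 2*m ∧
      (∀ B ∈ P, B.ncard = n / m) ∧
      (∀ g ∈ Subgroup.closure {σ0, σi, σ1, τ}, ∀ B ∈ P, (⇑g) '' B ∈ P))
    ↔ m ∣ h := by
  have hm0 : 0 < m := by omega
  set N := n / m with hNdef
  have hN : n = m * N := (Nat.mul_div_cancel' hmn).symm
  have hN2 : 2 ≤ N := hnm
  have h2n : 2*n = 2*m*N := by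
    have e : 2*(m*N) = 2*m*N := by ring
    omega
  have hn1 : 1 ≤ n := by omega
  have hh2n : h ≤ 2*n := by omega
  -- point formulas
  have hσ0j : ∀ j, 1 ≤ j → j ≤ 2*n → σ0 j = 2*n+1-j := by
    intro j h1 h2
    rw [hσ0, stmt_prod0_aux n n le_rfl j, if_pos (by omega)]
  have hσ1j : ∀ j, σ1 j =
      if 1 ≤ j ∧ j ≤ 2*n-1 ∧ j ≠ h ∧ j ≠ 2*n-h then 2*n-j else j := by
    intro j
    rw [hσ1, stmt_prod1_aux n h hn1 (n-1) le_rfl j]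
    split_ifs <;> omega
  constructor
  · -- forward direction
    rintro ⟨P, hU, hD, hcard, hBcard, hinv⟩
    have hσi_cl : σi ∈ Subgroup.closure {σ0, σi, σ1, τ} :=
      Subgroup.subset_closure (by simp)
    have hτ_cl : τ ∈ Subgroup.closure {σ0, σi, σ1, τ} :=
      Subgroup.subset_closure (by simp)
    have hBsub : ∀ B ∈ P, B ⊆ Set.Icc 1 (2*n) := by
      intro B hB x hx
      rw [← hU]
      exact ⟨B, hB, hx⟩
    have hBfin : ∀ B ∈ P, B.Finite := fun B hB =>
      (Set.finite_Icc 1 (2*n)).subset (hBsub B hB)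
    obtain ⟨B0, hB0P, hhB0⟩ : ∃ B ∈ P, h ∈ B := by
      have hhU : h ∈ ⋃₀ P := by
        rw [hU]; exact Set.mem_Icc.mpr ⟨hh1, by omega⟩
      exact Set.mem_sUnion.mp hhU
    have hpow : ∀ (t : ℕ) (B : Set ℕ), B ∈ P → (⇑(σi^t)) '' B ∈ P := fun t B hB =>
      hinv _ (pow_mem hσi_cl t) B hB
    have hcanc : ∀ a b, a ≤ b → (⇑(σi^a)) '' B0 = (⇑(σi^b)) '' B0 →
        (⇑(σi^(b-a))) '' B0 = B0 := by
      intro a b hab he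
      apply Set.image_injective.mpr (σi^a).injective
      have hcomp : (⇑(σi^a)) '' ((⇑(σi^(b-a))) '' B0) = (⇑(σi^b)) '' B0 := by
        rw [← Set.image_comp, ← Equiv.Perm.coe_mul, ← pow_add,
          show a + (b-a) = b from by omega]
      rw [hcomp, ← he]
    have hid2n : (⇑(σi^(2*n))) '' B0 = B0 := by
      have hfix : ∀ x ∈ B0, (σi^(2*n)) x = x := by
        intro x hx
        have hxI := hBsub B0 hB0P hx
        simp only [Set.mem_Icc] at hxI
        refine stmt_sigma_pow_eq n hn1 σi hi1 hij (X := 1) hxI.1 hxI.2 hxI.1 hxI.2 ?_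
        have e : 2*n*1 = 2*n := by ring
        omega
      calc (⇑(σi^(2*n))) '' B0 = id '' B0 := Set.image_congr hfix
        _ = B0 := Set.image_id B0
    classical
    have hex : ∃ d, 0 < d ∧ (⇑(σi^d)) '' B0 = B0 := ⟨2*n, by omega, hid2n⟩
    set d := Nat.find hex with hddef
    obtain ⟨hd0, hdB⟩ : 0 < d ∧ (⇑(σi^d)) '' B0 = B0 := Nat.find_spec hex
    have hdmin : ∀ e, 0 < e → e < d → ¬((⇑(σi^e)) '' B0 = B0) := by
      intro e he hed hcon
      exact Nat.find_min hex hed ⟨he, hcon⟩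
    have hmulp : ∀ q, (⇑(σi^(d*q))) '' B0 = B0 := by
      intro q
      induction q with
      | zero => simp
      | succ q ih =>
        rw [show d*(q+1) = d*q + d from by ring, pow_add, Equiv.Perm.coe_mul,
          Set.image_comp, hdB, ih]
    have hred : ∀ t, (⇑(σi^t)) '' B0 = (⇑(σi^(t % d))) '' B0 := by
      intro t
      conv_lhs => rw [← Nat.mod_add_div t d]
      rw [pow_add, Equiv.Perm.coe_mul, Set.image_comp, hmulp]
    have hPeq : ∀ B ∈ P, ∃ r, r < d ∧ B = (⇑(σi^r)) '' B0 := by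
      intro B hB
      have hBne : B.Nonempty := Set.nonempty_of_ncard_ne_zero (by rw [hBcard B hB]; omega)
      obtain ⟨y, hy⟩ := hBne
      have hyI := hBsub B hB hy
      simp only [Set.mem_Icc] at hyI
      have hhy : (σi^(h + 2*n - y)) h = y := by
        refine stmt_sigma_pow_eq n hn1 σi hi1 hij (X := 1) hh1 hh2n hyI.1 hyI.2 ?_
        have e : 2*n*1 = 2*n := by ring
        omega
      have h1 : y ∈ (⇑(σi^(h+2*n-y))) '' B0 := ⟨h, hhB0, hhy⟩
      have h2 : (⇑(σi^(h+2*n-y))) '' B0 ∈ P := hpow _ _ hB0P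
      have hBe : B = (⇑(σi^(h+2*n-y))) '' B0 := by
        by_contra hne
        exact Set.disjoint_left.mp (hD hB h2 hne) hy h1
      refine ⟨(h+2*n-y) % d, Nat.mod_lt _ hd0, ?_⟩
      rw [hBe, hred]
    have hinjd : Set.InjOn (fun r => (⇑(σi^r)) '' B0) (Set.Iio d) := by
      intro a ha b hb hab
      simp only [Set.mem_Iio] at ha hb
      by_contra hne
      rcases Nat.lt_or_ge a b with hl | hge
      · exact hdmin (b-a) (by omega) (by omega) (hcanc a b (by omega) hab)
      · exact hdmin (a-b) (by omega) (by omega) (hcanc b a (by omega) hab.symm)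
    have hPim : P = (fun r => (⇑(σi^r)) '' B0) '' (Set.Iio d) := by
      apply Set.Subset.antisymm
      · intro B hB
        obtain ⟨r, hrd, hre⟩ := hPeq B hB
        exact ⟨r, hrd, hre.symm⟩
      · rintro _ ⟨r, hr, rfl⟩
        exact hpow r B0 hB0P
    have hd2m : d = 2*m := by
      have hPn : P.ncard = d := by
        rw [hPim, Set.ncard_image_of_injOn hinjd, ← Finset.coe_range,
          Set.ncard_coe_finset, Finset.card_range]
      omega
    obtain ⟨c, k0, hch, hc1, hc2⟩ : ∃ c k0, h = c + 2*m*k0 ∧ 1 ≤ c ∧ c ≤ 2*m := by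
      refine ⟨(h-1) % (2*m) + 1, (h-1)/(2*m), ?_, by omega, ?_⟩
      · have := Nat.div_add_mod (h-1) (2*m)
        omega
      · have := Nat.mod_lt (h-1) (y := 2*m) (show 0 < 2*m by omega)
        omega
    have hk0N : k0 < N := by
      apply Nat.lt_of_mul_lt_mul_left (a := 2*m)
      omega
    have hblkB0 : stmtBlk m N c = B0 := by
      apply Set.eq_of_subset_of_ncard_le
      · intro x hx
        obtain ⟨k, hk, rfl⟩ := stmt_mem_blk.mp hx
        have hmem2n : (⇑(σi^(2*m*(k0+(N-k))))) '' B0 = B0 := by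
          have := hmulp (k0 + (N-k))
          rwa [hd2m] at this
        have hval : (σi^(2*m*(k0+(N-k)))) h = c + 2*m*k := by
          refine stmt_sigma_pow_eq n hn1 σi hi1 hij (X := 1) hh1 hh2n (by omega) ?_ ?_
          · have e1 : 2*m*(k+1) = 2*m*k + 2*m := by ring
            have e2 : 2*m*(k+1) ≤ 2*m*N := Nat.mul_le_mul_left _ (by omega)
            omega
          · have e0 : 2*n*1 = 2*n := by ring
            have e1 : 2*m*(k0+(N-k)) = 2*m*k0 + 2*m*(N-k) := by ring
            have e2 : 2*m*((N-k)+k) = 2*m*N := by rw [show (N-k)+k = N from by omega]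
            have e3 : 2*m*((N-k)+k) = 2*m*(N-k) + 2*m*k := by ring
            omega
        rw [← hmem2n]
        exact ⟨h, hhB0, hval⟩
      · rw [stmt_blk_ncard hm0, hBcard B0 hB0P]
      · exact hBfin B0 hB0P
    by_contra hmh
    have h2nhB0 : 2*n - h ∉ B0 := by
      rw [← hblkB0]
      intro hmem
      obtain ⟨k', hk', he⟩ := stmt_mem_blk.mp hmem
      have hkN : k0 + k' < N := by
        apply Nat.lt_of_mul_lt_mul_left (a := 2*m)
        have e0 : 2*m*(k0+k') = 2*m*k0 + 2*m*k' := by ring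
        omega
      have e2 : 2*m*(k0+k'+(N-k0-k')) = 2*m*N := by
        rw [show k0+k'+(N-k0-k') = N from by omega]
      have e3 : 2*m*(k0+k'+(N-k0-k')) = 2*m*k0 + 2*m*k' + 2*m*(N-k0-k') := by ring
      have e5 : 2*m*(N-k0-k') = 2*(m*(N-k0-k')) := by ring
      have e4 : m*((N-k0-k') + 2*k0) = m*(N-k0-k') + 2*m*k0 := by ring
      exact hmh ⟨(N-k0-k') + 2*k0, by omega⟩
    have hzex : ∃ z ∈ B0, z ≠ h ∧ z ≠ 2*n - h := by
      have m1 : c ∈ B0 := by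
        rw [← hblkB0]; exact stmt_mem_blk.mpr ⟨0, by omega, by simp⟩
      have m2 : c + 2*m*1 ∈ B0 := by
        rw [← hblkB0]; exact stmt_mem_blk.mpr ⟨1, by omega, rfl⟩
      by_cases hch' : c = h
      · refine ⟨c + 2*m*1, m2, ?_, fun hcon => h2nhB0 (hcon ▸ m2)⟩
        have e : 2*m*1 = 2*m := by ring
        omega
      · exact ⟨c, m1, hch', fun hcon => h2nhB0 (hcon ▸ m1)⟩
    obtain ⟨z, hzB0, hzh, hz2nh⟩ := hzex
    have hτB0P : (⇑τ) '' B0 ∈ P := hinv τ hτ_cl B0 hB0P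
    have hzτ : z ∈ (⇑τ) '' B0 :=
      ⟨z, hzB0, by rw [hτ]; exact Equiv.swap_apply_of_ne_of_ne hzh hz2nh⟩
    have hBeq : (⇑τ) '' B0 = B0 := by
      by_contra hne
      exact Set.disjoint_left.mp (hD hτB0P hB0P hne) hzτ hzB0
    apply h2nhB0
    rw [← hBeq]
    exact ⟨h, hhB0, by rw [hτ]; exact Equiv.swap_apply_left _ _⟩
  · -- backward direction
    intro hmh
    have hm2nh : m ∣ 2*n - h := by
      refine Nat.dvd_sub ⟨2*N, ?_⟩ hmh
      have e : m*(2*N) = 2*m*N := by ring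
      omega
    refine ⟨(fun c => stmtBlk m N c) '' Set.Icc 1 (2*m), ?_, ?_, ?_, ?_, ?_⟩
    · -- union
      ext x
      constructor
      · rintro ⟨B, ⟨c, hc, rfl⟩, hx⟩
        simp only [Set.mem_Icc] at hc
        obtain ⟨k, hk, rfl⟩ := stmt_mem_blk.mp hx
        have e1 : 2*m*(k+1) = 2*m*k + 2*m := by ring
        have e2 : 2*m*(k+1) ≤ 2*m*N := Nat.mul_le_mul_left _ (by omega)
        simp only [Set.mem_Icc]
        omega
      · intro hx
        simp only [Set.mem_Icc] at hx
        have hdm := Nat.div_add_mod (x-1) (2*m)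
        have hmod := Nat.mod_lt (x-1) (y := 2*m) (by omega)
        refine ⟨stmtBlk m N ((x-1) % (2*m) + 1),
          ⟨(x-1) % (2*m) + 1, Set.mem_Icc.mpr ⟨by omega, by omega⟩, rfl⟩,
          stmt_mem_blk.mpr ⟨(x-1)/(2*m), ?_, by omega⟩⟩
        apply Nat.lt_of_mul_lt_mul_left (a := 2*m)
        omega
    · -- pairwise disjoint
      rintro B ⟨c, hc, rfl⟩ B' ⟨c', hc', rfl⟩ hne
      simp only [Set.mem_Icc] at hc hc'
      have : Disjoint (stmtBlk m N c) (stmtBlk m N c') := by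
        rw [Set.disjoint_left]
        intro x hx hx'
        exact hne (by rw [stmt_blk_unique hc.1 hc.2 hc'.1 hc'.2 hx hx'])
      exact this
    · -- ncard
      have hinjOn : Set.InjOn (fun c => stmtBlk m N c) (Set.Icc 1 (2*m)) := by
        intro c hc c' hc' he
        simp only [Set.mem_Icc] at hc hc'
        have h1 : c ∈ stmtBlk m N c := stmt_mem_blk.mpr ⟨0, by omega, by simp⟩
        have he' : stmtBlk m N c = stmtBlk m N c' := he
        rw [he'] at h1
        exact stmt_blk_unique hc.1 hc.2 hc'.1 hc'.2
          (stmt_mem_blk.mpr ⟨0, by omega, by simp⟩) h1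
      rw [Set.ncard_image_of_injOn hinjOn, ← Finset.coe_Icc, Set.ncard_coe_finset,
        Nat.card_Icc]
      omega
    · -- block sizes
      rintro B ⟨c, hc, rfl⟩
      exact stmt_blk_ncard hm0 N c
    · -- invariance
      have hmemP : ∀ c, 1 ≤ c → c ≤ 2*m →
          stmtBlk m N c ∈ (fun c => stmtBlk m N c) '' Set.Icc 1 (2*m) :=
        fun c h1 h2 => ⟨c, Set.mem_Icc.mpr ⟨h1, h2⟩, rfl⟩
      have hbd : ∀ c k, c ≤ 2*m → k < N → c + 2*m*k ≤ 2*n := by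
        intro c k hc hk
        have e1 : 2*m*(k+1) = 2*m*k + 2*m := by ring
        have e2 : 2*m*(k+1) ≤ 2*m*N := Nat.mul_le_mul_left _ (by omega)
        omega
      -- σ0 preserves
      have hpres0 : ∀ B ∈ (fun c => stmtBlk m N c) '' Set.Icc 1 (2*m),
          ⇑σ0 '' B ∈ (fun c => stmtBlk m N c) '' Set.Icc 1 (2*m) := by
        rintro B ⟨c, hc, rfl⟩
        simp only [Set.mem_Icc] at hc
        show ⇑σ0 '' stmtBlk m N c ∈ _
        have himg : ⇑σ0 '' stmtBlk m N c = stmtBlk m N (2*m+1-c) := by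
          apply stmt_img_blk hm0
          intro k hk
          have hb := hbd c k hc.2 hk
          rw [hσ0j _ (by omega) hb]
          refine stmt_mem_blk.mpr ⟨N-1-k, by omega, ?_⟩
          have e1 : 2*m*((N-1-k)+k+1) = 2*m*N := by
            rw [show (N-1-k)+k+1 = N from by omega]
          have e2 : 2*m*((N-1-k)+k+1) = 2*m*(N-1-k) + 2*m*k + 2*m := by ring
          omega
        rw [himg]
        exact hmemP _ (by omega) (by omega)
      -- σi preserves
      have hpresi : ∀ B ∈ (fun c => stmtBlk m N c) '' Set.Icc 1 (2*m),
          ⇑σi '' B ∈ (fun c => stmtBlk m N c) '' Set.Icc 1 (2*m) := by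
        rintro B ⟨c, hc, rfl⟩
        simp only [Set.mem_Icc] at hc
        show ⇑σi '' stmtBlk m N c ∈ _
        by_cases hc1 : c = 1
        · subst hc1
          have himg : ⇑σi '' stmtBlk m N 1 = stmtBlk m N (2*m) := by
            apply stmt_img_blk hm0
            intro k hk
            rcases Nat.eq_zero_or_pos k with rfl | hkp
            · rw [show 1 + 2*m*0 = 1 from by simp, hi1]
              refine stmt_mem_blk.mpr ⟨N-1, by omega, ?_⟩
              have e1 : 2*m*((N-1)+1) = 2*m*N := by
                rw [show (N-1)+1 = N from by omega]
              have e2 : 2*m*((N-1)+1) = 2*m*(N-1) + 2*m := by ring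
              omega
            · have hb := hbd 1 k (by omega) hk
              have e3 : 2*m*1 ≤ 2*m*k := Nat.mul_le_mul_left _ hkp
              rw [hij _ (by omega) hb]
              refine stmt_mem_blk.mpr ⟨k-1, by omega, ?_⟩
              have e1 : 2*m*((k-1)+1) = 2*m*k := by
                rw [show (k-1)+1 = k from by omega]
              have e2 : 2*m*((k-1)+1) = 2*m*(k-1) + 2*m := by ring
              omega
          rw [himg]
          exact hmemP _ (by omega) le_rfl
        · have himg : ⇑σi '' stmtBlk m N c = stmtBlk m N (c-1) := by
            apply stmt_img_blk hm0
            intro k hk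
            have hb := hbd c k hc.2 hk
            rw [hij _ (by omega) hb]
            exact stmt_mem_blk.mpr ⟨k, hk, by omega⟩
          rw [himg]
          exact hmemP _ (by omega) (by omega)
      -- τ preserves
      have hprest : ∀ B ∈ (fun c => stmtBlk m N c) '' Set.Icc 1 (2*m),
          ⇑τ '' B ∈ (fun c => stmtBlk m N c) '' Set.Icc 1 (2*m) := by
        rintro B ⟨c, hc, rfl⟩
        simp only [Set.mem_Icc] at hc
        show ⇑τ '' stmtBlk m N c ∈ _
        have himg : ⇑τ '' stmtBlk m N c = stmtBlk m N c := by
          apply stmt_img_blk hm0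
          intro k hk
          have hb := hbd c k hc.2 hk
          by_cases hxh : c + 2*m*k = h
          · rw [hxh, hτ, Equiv.swap_apply_left]
            rcases stmt_c_mod hc.1 hc.2 hxh.symm hmh with hcm | hcm
            · refine stmt_mem_blk.mpr ⟨N-1-k, by omega, ?_⟩
              have e1 : 2*m*((N-1-k)+k+1) = 2*m*N := by
                rw [show (N-1-k)+k+1 = N from by omega]
              have e2 : 2*m*((N-1-k)+k+1) = 2*m*(N-1-k) + 2*m*k + 2*m := by ring
              omega
            · have hk2 : k + 2 ≤ N := by
                by_contra hcon
                have hNk : N ≤ k + 1 := by omega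
                have e3 := Nat.mul_le_mul_left (2*m) hNk
                have e4 : 2*m*(k+1) = 2*m*k + 2*m := by ring
                omega
              refine stmt_mem_blk.mpr ⟨N-2-k, by omega, ?_⟩
              have e1 : 2*m*((N-2-k)+k+2) = 2*m*N := by
                rw [show (N-2-k)+k+2 = N from by omega]
              have e2 : 2*m*((N-2-k)+k+2) = 2*m*(N-2-k) + 2*m*k + 2*m + 2*m := by ring
              omega
          · by_cases hxh' : c + 2*m*k = 2*n - h
            · rw [hxh', hτ, Equiv.swap_apply_right]
              rcases stmt_c_mod hc.1 hc.2 hxh'.symm hm2nh with hcm | hcm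
              · refine stmt_mem_blk.mpr ⟨N-1-k, by omega, ?_⟩
                have e1 : 2*m*((N-1-k)+k+1) = 2*m*N := by
                  rw [show (N-1-k)+k+1 = N from by omega]
                have e2 : 2*m*((N-1-k)+k+1) = 2*m*(N-1-k) + 2*m*k + 2*m := by ring
                omega
              · have hk2 : k + 2 ≤ N := by
                  by_contra hcon
                  have hNk : N ≤ k + 1 := by omega
                  have e3 := Nat.mul_le_mul_left (2*m) hNk
                  have e4 : 2*m*(k+1) = 2*m*k + 2*m := by ring
                  omega
                refine stmt_mem_blk.mpr ⟨N-2-k, by omega, ?_⟩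
                have e1 : 2*m*((N-2-k)+k+2) = 2*m*N := by
                  rw [show (N-2-k)+k+2 = N from by omega]
                have e2 : 2*m*((N-2-k)+k+2) = 2*m*(N-2-k) + 2*m*k + 2*m + 2*m := by ring
                omega
            · rw [hτ, Equiv.swap_apply_of_ne_of_ne hxh hxh']
              exact stmt_mem_blk.mpr ⟨k, hk, rfl⟩
        rw [himg]
        exact hmemP _ hc.1 hc.2
      -- σ1 preserves
      have hpres1 : ∀ B ∈ (fun c => stmtBlk m N c) '' Set.Icc 1 (2*m),
          ⇑σ1 '' B ∈ (fun c => stmtBlk m N c) '' Set.Icc 1 (2*m) := by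
        rintro B ⟨c, hc, rfl⟩
        simp only [Set.mem_Icc] at hc
        show ⇑σ1 '' stmtBlk m N c ∈ _
        by_cases hc2m : c = 2*m
        · subst hc2m
          have himg : ⇑σ1 '' stmtBlk m N (2*m) = stmtBlk m N (2*m) := by
            apply stmt_img_blk hm0
            intro k hk
            have hb := hbd (2*m) k le_rfl hk
            by_cases hx2n : 2*m + 2*m*k = 2*n
            · rw [hσ1j, if_neg (by omega)]
              refine stmt_mem_blk.mpr ⟨k, hk, rfl⟩
            · by_cases hxh : 2*m + 2*m*k = h
              · rw [hσ1j, if_neg (by omega)]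
                exact stmt_mem_blk.mpr ⟨k, hk, rfl⟩
              · by_cases hxh' : 2*m + 2*m*k = 2*n - h
                · rw [hσ1j, if_neg (by omega)]
                  exact stmt_mem_blk.mpr ⟨k, hk, rfl⟩
                · rw [hσ1j, if_pos (by omega)]
                  have hk2 : k + 2 ≤ N := by
                    by_contra hcon
                    have hNk : k = N - 1 := by omega
                    rw [hNk] at hx2n
                    have e1 : 2*m*(N-1) + 2*m*1 = 2*m*((N-1)+1) := by ring
                    have e2 : 2*m*((N-1)+1) = 2*m*N := by
                      rw [show (N-1)+1 = N from by omega]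
                    omega
                  refine stmt_mem_blk.mpr ⟨N-2-k, by omega, ?_⟩
                  have e1 : 2*m*((N-2-k)+k+2) = 2*m*N := by
                    rw [show (N-2-k)+k+2 = N from by omega]
                  have e2 : 2*m*((N-2-k)+k+2) = 2*m*(N-2-k) + 2*m*k + 2*m + 2*m := by ring
                  omega
          rw [himg]
          exact hmemP _ (by omega) le_rfl
        · have himg : ⇑σ1 '' stmtBlk m N c = stmtBlk m N (2*m - c) := by
            apply stmt_img_blk hm0
            intro k hk
            have hb := hbd c k hc.2 hk
            have hxlt : c + 2*m*k ≤ 2*n - 1 := by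
              have e1 : 2*m*(k+1) = 2*m*k + 2*m := by ring
              have e2 : 2*m*(k+1) ≤ 2*m*N := Nat.mul_le_mul_left _ (by omega)
              omega
            by_cases hxh : c + 2*m*k = h
            · rw [hσ1j, if_neg (by omega)]
              rcases stmt_c_mod hc.1 hc.2 hxh.symm hmh with hcm | hcm
              · rw [show 2*m - c = c from by omega]
                exact stmt_mem_blk.mpr ⟨k, hk, rfl⟩
              · exact absurd hcm hc2m
            · by_cases hxh' : c + 2*m*k = 2*n - h
              · rw [hσ1j, if_neg (by omega)]
                rcases stmt_c_mod hc.1 hc.2 hxh'.symm hm2nh with hcm | hcm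
                · rw [show 2*m - c = c from by omega]
                  exact stmt_mem_blk.mpr ⟨k, hk, rfl⟩
                · exact absurd hcm hc2m
              · rw [hσ1j, if_pos (by omega)]
                refine stmt_mem_blk.mpr ⟨N-1-k, by omega, ?_⟩
                have e1 : 2*m*((N-1-k)+k+1) = 2*m*N := by
                  rw [show (N-1-k)+k+1 = N from by omega]
                have e2 : 2*m*((N-1-k)+k+1) = 2*m*(N-1-k) + 2*m*k + 2*m := by ring
                omega
          rw [himg]
          exact hmemP _ (by omega) (by omega)
      have hPfin : ((fun c => stmtBlk m N c) '' Set.Icc 1 (2*m)).Finite :=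
        (Set.finite_Icc 1 (2*m)).image _
      intro g hg
      induction hg using Subgroup.closure_induction with
      | mem x hx =>
        simp only [Set.mem_insert_iff, Set.mem_singleton_iff] at hx
        rcases hx with rfl | rfl | rfl | rfl
        · exact hpres0
        · exact hpresi
        · exact hpres1
        · exact hprest
      | one =>
        intro B hB
        simpa using hB
      | mul x y hx hy ihx ihy =>
        intro B hB
        rw [Equiv.Perm.coe_mul, Set.image_comp]
        exact ihx _ (ihy _ hB)
      | inv x hx ih =>
        exact stmt_inv_pres hPfin x ih
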